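/- Let n ≥ 1, let A ⊆ B ⊆ ℝ^n be finite sets with the vectors of A linearly independent, and set N = |B ∖ A|. For an integer r ≥ 0 let 𝒫_r = {Z ⊆ B ∖ A : |Z| = r and the vectors of A ∪ Z are linearly independent}. Then for every integer r with 0 ≤ r ≤ N − 1, |𝒫_r| · C(N, r+1) ≥ |𝒫_{r+1}| · C(N, r); equivalently, the probability p_r = |𝒫_r| / C(N, r) that a uniformly random completion of A by r elements of B ∖ A remains linearly independent is non-increasing in r. -/

import Mathlib

noncomputable section

/-- A finite set `Y` of vectors of `ℝⁿ` consists of linearly independent vectors. -/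
def indepFinset {n : ℕ} (Y : Finset (Fin n → ℝ)) : Prop :=
  LinearIndependent ℝ (fun x : (Y : Set (Fin n → ℝ)) => (x : Fin n → ℝ))

/-- `rank X`: the dimension of the linear span of a finite set `X` of vectors of `ℝⁿ`. -/
def rankOf {n : ℕ} (X : Finset (Fin n → ℝ)) : ℕ :=
  Module.finrank ℝ ↥(Submodule.span ℝ (X : Set (Fin n → ℝ)))

/-- The rank deficiency `δ(X) = |X| - rank X` of a finite set `X` of vectors of `ℝⁿ`. -/
def rankDef {n : ℕ} (X : Finset (Fin n → ℝ)) : ℕ :=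
  X.card - rankOf X

open scoped Classical in
/-- `|𝒫_r|`: the number of subsets `Z ⊆ B \ A` with `|Z| = r` such that the vectors
of `A ∪ Z` are linearly independent. -/
def pCount {n : ℕ} (r : ℕ) (A B : Finset (Fin n → ℝ)) : ℕ :=
  (((B \ A).powersetCard r).filter fun Z => indepFinset (A ∪ Z)).card

lemma indepFinset_mono {n : ℕ} {X Y : Finset (Fin n → ℝ)} (h : Y ⊆ X)
    (hX : indepFinset X) : indepFinset Y :=
  LinearIndepOn.mono (R := ℝ) (v := id) hX (by exact_mod_cast h)

open scoped Classical in
lemma pCount_key {n : ℕ} (r : ℕ) (A B : Finset (Fin n → ℝ)) :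
    pCount (r + 1) A B * (r + 1) ≤ pCount r A B * ((B \ A).card - r) := by
  set D := B \ A with hD
  set s := (D.powersetCard (r + 1)).filter fun Z => indepFinset (A ∪ Z) with hs
  set t := (D.powersetCard r).filter fun Z => indepFinset (A ∪ Z) with ht
  have := Finset.card_mul_le_card_mul (s := s) (t := t)
    (fun Z Z' => Z' ⊆ Z)
    (fun Z hZ => by
      -- every r-subset of Z is in t and below Z
      have hZm := Finset.mem_filter.1 hZ
      have hZD := (Finset.mem_powersetCard.1 hZm.1).1
      have hZc := (Finset.mem_powersetCard.1 hZm.1).2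
      have hsub : Z.powersetCard r ⊆ t.bipartiteAbove (fun Z Z' => Z' ⊆ Z) Z := by
        intro Z' hZ'
        rw [Finset.mem_powersetCard] at hZ'
        refine (Finset.mem_bipartiteAbove _).2 ⟨Finset.mem_filter.2 ⟨?_, ?_⟩, hZ'.1⟩
        · exact Finset.mem_powersetCard.2 ⟨hZ'.1.trans hZD, hZ'.2⟩
        · exact indepFinset_mono (Finset.union_subset_union_right hZ'.1) hZm.2
      calc r + 1 = (Z.powersetCard r).card := by
            rw [Finset.card_powersetCard, hZc, Nat.choose_succ_self_right]
        _ ≤ _ := Finset.card_le_card hsub)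
    (fun Z' hZ' => by
      have hZ'm := Finset.mem_filter.1 hZ'
      have hZ'D := (Finset.mem_powersetCard.1 hZ'm.1).1
      have hZ'c := (Finset.mem_powersetCard.1 hZ'm.1).2
      -- supersets of Z' in s inject into 1-element subsets of D \ Z'
      have hinj : ∀ Z₁ ∈ s.bipartiteBelow (fun Z Z' => Z' ⊆ Z) Z',
          Z₁ \ Z' ∈ (D \ Z').powersetCard 1 := by
        intro Z₁ h₁
        obtain ⟨h₁s, h₁sub⟩ := (Finset.mem_bipartiteBelow _).1 h₁
        have h₁m := Finset.mem_filter.1 h₁s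
        have h₁D := (Finset.mem_powersetCard.1 h₁m.1).1
        have h₁c := (Finset.mem_powersetCard.1 h₁m.1).2
        refine Finset.mem_powersetCard.2 ⟨?_, ?_⟩
        · exact Finset.sdiff_subset_sdiff h₁D (le_refl _)
        · rw [Finset.card_sdiff_of_subset h₁sub, h₁c, hZ'c]; omega
      calc (s.bipartiteBelow (fun Z Z' => Z' ⊆ Z) Z').card
          ≤ ((D \ Z').powersetCard 1).card := by
            apply Finset.card_le_card_of_injOn (fun Z₁ => Z₁ \ Z') hinj
            intro Z₁ h₁ Z₂ h₂ h12
            obtain ⟨_, h₁sub⟩ := (Finset.mem_bipartiteBelow _).1 h₁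
            obtain ⟨_, h₂sub⟩ := (Finset.mem_bipartiteBelow _).1 h₂
            rw [← Finset.sdiff_union_of_subset h₁sub, ← Finset.sdiff_union_of_subset h₂sub]; simp only at h12; rw [h12]
        _ = D.card - r := by
            rw [Finset.card_powersetCard, Finset.card_sdiff_of_subset hZ'D, hZ'c, Nat.choose_one_right])
  simpa [pCount, hs, ht] using this

/-- The probability `p_r = |𝒫_r| / C(N, r)` that a uniformly random completion of `A`
by `r` elements of `B \ A` remains linearly independent is non-increasing in `r`:
for `0 ≤ r ≤ N - 1`, `|𝒫_{r+1}| · C(N, r) ≤ |𝒫_r| · C(N, r+1)`, where `N = |B \ A|`. -/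
theorem pCount_monotone
    (n : ℕ) (hn : 1 ≤ n)
    (A B : Finset (Fin n → ℝ)) (hAB : A ⊆ B) (hA : indepFinset A)
    (r : ℕ) (hr : r + 1 ≤ (B \ A).card) :
    pCount (r + 1) A B * Nat.choose (B \ A).card r
      ≤ pCount r A B * Nat.choose (B \ A).card (r + 1) := by
  set N := (B \ A).card
  have key := pCount_key r A B
  have hchoose : N.choose (r + 1) * (r + 1) = N.choose r * (N - r) :=
    Nat.choose_succ_right_eq N r
  apply Nat.le_of_mul_le_mul_right _ (Nat.succ_pos r)
  calc pCount (r + 1) A B * N.choose r * (r + 1)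
      = (pCount (r + 1) A B * (r + 1)) * N.choose r := by ring
    _ ≤ (pCount r A B * (N - r)) * N.choose r := by
        exact Nat.mul_le_mul_right _ key
    _ = pCount r A B * (N.choose r * (N - r)) := by ring
    _ = pCount r A B * (N.choose (r + 1) * (r + 1)) := by rw [hchoose]
    _ = pCount r A B * N.choose (r + 1) * (r + 1) := by ring
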